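/- Let A be an OA(k,n) and define σ_ij as the permutation of Λ² sending r to (a_{ri}, a_{rj}), and τ^c_{ij} = π(σ_{ci} σ_{cj}) ∈ Z₂ (sum of signs). Then for any l ≥ 3 distinct columns c₁,...,c_l of A, the cyclic sum τ^{c₁}_{c_l c₂} + τ^{c₂}_{c₁ c₃} + ... + τ^{c_l}_{c_{l−1} c₁} equals l·C(n,2) mod 2. -/

import Mathlib

open Finset Equiv

namespace OAStmt5Aux

variable {n : ℕ}

private def S (n : ℕ) : Finset (Fin n × Fin n) := univ.filter (fun p => p.1 < p.2)

private def f (p : Fin n × Fin n) : Equiv.Perm (Fin n × Fin n) := Equiv.swap p p.swap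

private lemma f_fix {p x : Fin n × Fin n} (h1 : x ≠ p) (h2 : x ≠ p.swap) : f p x = x :=
  Equiv.swap_apply_of_ne_of_ne h1 h2

private lemma hcomm : ∀ p ∈ S n, ∀ q ∈ S n, p ≠ q → Commute (f p) (f q) := by
  intro p hp q hq hpq
  simp only [S, mem_filter] at hp hq
  have hps : p ≠ q.swap := fun h => absurd (h ▸ hp.2) (by simp [Prod.swap]; omega)
  have hsq : p.swap ≠ q := by
    intro h
    have h2 := hq.2
    rw [← h] at h2
    simp only [Prod.fst_swap, Prod.snd_swap] at h2
    exact absurd hp.2 (asymm h2)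
  have hss : p.swap ≠ q.swap := fun h => hpq (Prod.swap_injective h)
  apply Equiv.Perm.Disjoint.commute
  intro x
  by_cases hx : x = p ∨ x = p.swap
  · right
    rcases hx with rfl | rfl
    · exact f_fix hpq hps
    · exact f_fix hsq hss
  · push_neg at hx
    exact Or.inl (f_fix hx.1 hx.2)

private lemma fix_of_all_fix {t : Finset (Fin n × Fin n)}
    (comm : (t : Set (Fin n × Fin n)).Pairwise (Function.onFun Commute f)) (x : Fin n × Fin n)
    (hfix : ∀ p ∈ t, f p x = x) : t.noncommProd f comm x = x := by
  refine Finset.noncommProd_induction t f comm (fun σ => σ x = x) ?_ rfl hfix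
  intro σ τ hσ hτ
  simp [Equiv.Perm.mul_apply, hτ, hσ]

private lemma prodComm_eq : (Equiv.prodComm (Fin n) (Fin n) : Equiv.Perm (Fin n × Fin n)) =
    (S n).noncommProd f hcomm := by
  refine Equiv.ext fun x => ?_
  rcases lt_trichotomy x.1 x.2 with h | h | h
  · have hx : x ∈ S n := by simp [S, h]
    erw [← Finset.mul_noncommProd_erase (S n) hx f hcomm, Equiv.Perm.mul_apply,
      fix_of_all_fix _ x ?_]
    · simp [f, Equiv.swap_apply_left, Equiv.prodComm_apply]
    · intro p hp
      simp only [mem_erase, S, mem_filter] at hp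
      refine f_fix (Ne.symm hp.1) (fun hxs => ?_)
      rw [hxs] at h
      simp only [Prod.fst_swap, Prod.snd_swap] at h
      exact absurd hp.2.2 (asymm h)
  · have : x.swap = x := by ext <;> simp [Prod.swap, h]
    erw [fix_of_all_fix _ x ?_]
    · simp [Equiv.prodComm_apply, this]
    · intro p hp
      simp only [S, mem_filter] at hp
      refine f_fix (fun hxp => ?_) (fun hxs => ?_)
      · rw [hxp] at h; exact absurd h (ne_of_lt hp.2)
      · rw [hxs] at h; simp [Prod.swap] at h; omega
  · have hy : x.swap ∈ S n := by simp [S, Prod.swap, h]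
    erw [← Finset.mul_noncommProd_erase (S n) hy f hcomm, Equiv.Perm.mul_apply,
      fix_of_all_fix _ x ?_]
    · have : f x.swap x = x.swap := by
        have : x = (x.swap).swap := by simp
        conv_lhs => rw [this]
        exact Equiv.swap_apply_right _ _
      simp [this, Equiv.prodComm_apply]
    · intro p hp
      simp only [mem_erase, S, mem_filter] at hp
      refine f_fix (fun hxp => ?_) (fun hxs => hp.1 ?_)
      · rw [hxp] at h; exact absurd hp.2.2 (not_lt.2 (le_of_lt h))
      · simp [hxs]

private lemma sign_prodComm_fin :
    Equiv.Perm.sign (Equiv.prodComm (Fin n) (Fin n) : Equiv.Perm (Fin n × Fin n)) =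
      (-1) ^ (n.choose 2) := by
  rw [prodComm_eq, Finset.map_noncommProd (S n) f hcomm Equiv.Perm.sign,
    Finset.noncommProd_eq_prod]
  have hcard : (S n).card = n.choose 2 := by
    rw [S, Finset.card_eq_sum_card_fiberwise (f := Prod.snd) (t := univ) (fun p _ => mem_univ _)]
    have h : ∀ j : Fin n, ((univ.filter (fun p : Fin n × Fin n => p.1 < p.2)).filter
        (fun p => p.2 = j)).card = (j : ℕ) := by
      intro j
      rw [← Fin.card_Iio j]
      apply Finset.card_bij (fun p _ => p.1)
      · rintro ⟨x, y⟩ hp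
        simp only [mem_filter, mem_univ, true_and] at hp
        simp [mem_Iio, ← hp.2, hp.1]
      · rintro ⟨x₁, y₁⟩ h1 ⟨x₂, y₂⟩ h2 h
        simp only [mem_filter] at h1 h2
        simp_all [Prod.ext_iff]
      · intro b hb
        exact ⟨(b, j), by simp [mem_Iio.1 hb], rfl⟩
    simp_rw [h]
    rw [Fin.sum_univ_eq_sum_range (fun i => i), Nat.choose_two_right,
      ← Finset.sum_range_id_mul_two n, Nat.mul_div_cancel _ (by norm_num)]
  rw [← hcard, ← Finset.prod_const]
  apply Finset.prod_congr rfl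
  intro p hp
  simp only [S, mem_filter] at hp
  apply Equiv.Perm.sign_swap
  intro h
  exact ne_of_lt hp.2 (congrArg Prod.fst h)

lemma sign_prodComm' (Λ : Type*) [Fintype Λ] [DecidableEq Λ] :
    Equiv.Perm.sign (Equiv.prodComm Λ Λ : Equiv.Perm (Λ × Λ)) =
      (-1) ^ ((Fintype.card Λ).choose 2) := by
  rw [← sign_prodComm_fin (n := Fintype.card Λ)]
  apply Equiv.Perm.sign_eq_sign_of_equiv _ _
    ((Fintype.equivFin Λ).prodCongr (Fintype.equivFin Λ))
  intro x
  rfl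

end OAStmt5Aux

/-- The parity (in `Z₂`) of a permutation. -/
def permParity {α : Type*} [Fintype α] [DecidableEq α] (σ : Equiv.Perm α) : ZMod 2 :=
  if Equiv.Perm.sign σ = 1 then 0 else 1

lemma permParity_mul {α : Type*} [Fintype α] [DecidableEq α] (σ τ : Equiv.Perm α) :
    permParity (σ * τ) = permParity σ + permParity τ := by
  unfold permParity
  rcases Int.units_eq_one_or (Equiv.Perm.sign σ) with h | h <;>
    rcases Int.units_eq_one_or (Equiv.Perm.sign τ) with h' | h' <;>
      simp [map_mul, h, h'] <;> decide

lemma permParity_prodComm (Λ : Type*) [Fintype Λ] [DecidableEq Λ] :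
    permParity (Equiv.prodComm Λ Λ : Equiv.Perm (Λ × Λ)) =
      (((Fintype.card Λ).choose 2 : ℕ) : ZMod 2) := by
  unfold permParity
  rw [OAStmt5Aux.sign_prodComm' Λ]
  rcases Nat.even_or_odd ((Fintype.card Λ).choose 2) with h | h
  · rw [h.neg_one_pow, if_pos rfl, eq_comm, ZMod.natCast_eq_zero_iff]
    exact h.two_dvd
  · rw [h.neg_one_pow, if_neg (by decide)]
    obtain ⟨r, hr⟩ := h
    rw [hr]
    push_cast
    have h2 : (2 : ZMod 2) = 0 := by decide
    ring_nf
    simp [h2]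

/-- For an `OA(k,n)` with `σ_{ij}(r) = (a r i, a r j)` and
`τ^c_{ij} = π(σ_{ci} σ_{cj})`, the cyclic sum of `τ`-parities over `l ≥ 3`
distinct columns `c₁, …, c_l` equals `l·C(n,2)` mod 2. -/
theorem stmt5 {Λ : Type*} [Fintype Λ] [DecidableEq Λ] (n k l : ℕ) [NeZero l]
    (hl : 3 ≤ l) (hcard : Fintype.card Λ = n)
    (a : Λ × Λ → Fin k → Λ)
    (σA : Fin k → Fin k → Equiv.Perm (Λ × Λ))
    (hσ : ∀ i j : Fin k, i ≠ j → ∀ r : Λ × Λ, σA i j r = (a r i, a r j))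
    (c : Fin l → Fin k) (hc : Function.Injective c) :
    ∑ i : Fin l, permParity (σA (c i) (c (i - 1)) * σA (c i) (c (i + 1))) =
      ((l * n.choose 2 : ℕ) : ZMod 2) := by
  have h10 : (1 : Fin l) ≠ 0 := by
    rw [Fin.ne_iff_vne, Fin.val_one', Fin.val_zero]
    rw [Nat.mod_eq_of_lt (by omega)]
    omega
  -- the key swap relation
  have key : ∀ i j : Fin k, i ≠ j →
      permParity (σA j i) = ((n.choose 2 : ℕ) : ZMod 2) + permParity (σA i j) := by
    intro i j hij
    have heq : σA j i = (Equiv.prodComm Λ Λ : Equiv.Perm (Λ × Λ)) * σA i j := by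
      refine Equiv.ext fun r => ?_
      rw [Equiv.Perm.mul_apply, hσ i j hij r, hσ j i (Ne.symm hij) r]
      rfl
    rw [heq, permParity_mul, permParity_prodComm, hcard]
  -- split the parities
  have hsplit : ∀ i : Fin l,
      permParity (σA (c i) (c (i - 1)) * σA (c i) (c (i + 1))) =
        permParity (σA (c i) (c (i - 1))) + permParity (σA (c i) (c (i + 1))) :=
    fun i => permParity_mul _ _
  simp_rw [hsplit]
  rw [Finset.sum_add_distrib]
  -- reindex the first sum: i ↦ i + 1
  have hre : ∑ i : Fin l, permParity (σA (c i) (c (i - 1))) =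
      ∑ i : Fin l, permParity (σA (c (i + 1)) (c i)) := by
    refine Fintype.sum_equiv (Equiv.subRight (1 : Fin l)) _ _ fun i => ?_
    simp [Equiv.subRight_apply, sub_add_cancel]
  rw [hre]
  have hne : ∀ i : Fin l, c i ≠ c (i + 1) := by
    intro i h
    have := hc h
    exact h10 (by
      have : i + 1 = i := this.symm
      rwa [add_eq_left] at this)
  have hkey : ∀ i : Fin l, permParity (σA (c (i + 1)) (c i)) =
      ((n.choose 2 : ℕ) : ZMod 2) + permParity (σA (c i) (c (i + 1))) :=
    fun i => key _ _ (hne i)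
  simp_rw [hkey]
  rw [Finset.sum_add_distrib, Finset.sum_const, Finset.card_univ, Fintype.card_fin]
  have h2 : ∀ x : ZMod 2, x + x = 0 := by decide
  push_cast
  ring_nf
  rw [show (2 : ZMod 2) = 0 by decide, mul_zero, add_zero]
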